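/- For λ ≥ 1 let N = ⌊(λ−1)/6⌋, let E_λ = ⋃_{n=−N}^{N} [3n − 1/2, 3n + 1/2] ⊆ ℝ, and let F_λ = 1_{E_λ} ⋆ 1_{E_λ} be the convolution of the indicator function of E_λ with itself. Then: (i) the Fourier transform F̂_λ satisfies F̂_λ(ξ) ≥ 0 for all ξ ∈ ℝ; (ii) F_λ(x) = 0 whenever 1 < |x| < 2 or |x| > λ; (iii) F_λ(0)/F̂_λ(0) = 1/(2N+1); and consequently (iv) lim_{λ→∞} (2+λ)·F_λ(0)/F̂_λ(0) = 3. -/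

import Mathlib

open MeasureTheory Filter Set FourierTransform

noncomputable section

/-- `E_λ = ⋃_{n=-N}^{N} [3n - 1/2, 3n + 1/2]` with `N = ⌊(λ-1)/6⌋`. -/
def Eset (lam : ℝ) : Set ℝ :=
  ⋃ n ∈ Finset.Icc (-⌊(lam - 1) / 6⌋) ⌊(lam - 1) / 6⌋,
    Icc ((3 * n : ℝ) - 1 / 2) ((3 * n : ℝ) + 1 / 2)

/-- `F_λ = 1_{E_λ} ⋆ 1_{E_λ}`. -/
def Fconv (lam : ℝ) (x : ℝ) : ℝ :=
  ∫ y : ℝ, (Eset lam).indicator (fun _ => (1 : ℝ)) y *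
    (Eset lam).indicator (fun _ => (1 : ℝ)) (x - y)

def Ind (lam : ℝ) : ℝ → ℝ := (Eset lam).indicator fun _ => 1

lemma mem_Eset_iff {lam x : ℝ} :
    x ∈ Eset lam ↔ ∃ n : ℤ, -⌊(lam - 1) / 6⌋ ≤ n ∧ n ≤ ⌊(lam - 1) / 6⌋ ∧
      (3 * n : ℝ) - 1 / 2 ≤ x ∧ x ≤ (3 * n : ℝ) + 1 / 2 := by
  simp only [Eset, mem_iUnion, Finset.mem_Icc, mem_Icc, exists_prop, and_assoc]

lemma Eset_neg {lam x : ℝ} : -x ∈ Eset lam ↔ x ∈ Eset lam := by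
  constructor <;>
  · rw [mem_Eset_iff, mem_Eset_iff]
    rintro ⟨n, h1, h2, h3, h4⟩
    exact ⟨-n, by omega, by omega, by push_cast; linarith, by push_cast; linarith⟩

lemma Eset_measurable (lam : ℝ) : MeasurableSet (Eset lam) := by
  exact MeasurableSet.biUnion (Finset.Icc _ _).countable_toSet fun n _ => measurableSet_Icc

lemma Eset_volume (lam : ℝ) :
    volume (Eset lam) = (Finset.Icc (-⌊(lam - 1) / 6⌋) ⌊(lam - 1) / 6⌋).card := by
  rw [Eset, measure_biUnion_finset]
  · simp [Real.volume_Icc]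
    norm_num
  · intro m hm n hn hmn
    simp only [Function.onFun]
    rw [Set.disjoint_left]
    intro a ha ha'
    simp only [mem_Icc] at ha ha'
    rcases lt_or_gt_of_ne hmn with h | h
    · have : (m : ℝ) + 1 ≤ n := by exact_mod_cast h
      linarith
    · have : (n : ℝ) + 1 ≤ m := by exact_mod_cast h
      linarith
  · exact fun n _ => measurableSet_Icc

lemma Eset_volume_real {lam : ℝ} (h : 1 ≤ lam) :
    (volume (Eset lam)).toReal = 2 * (⌊(lam - 1) / 6⌋ : ℝ) + 1 := by
  have hN : (0:ℤ) ≤ ⌊(lam - 1) / 6⌋ := Int.floor_nonneg.mpr (by linarith)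
  rw [Eset_volume]
  rw [Int.card_Icc, ENNReal.toReal_natCast]
  have h2 : (((⌊(lam - 1) / 6⌋ + 1 - -⌊(lam - 1) / 6⌋).toNat : ℕ) : ℝ)
      = ((⌊(lam - 1) / 6⌋ + 1 - -⌊(lam - 1) / 6⌋ : ℤ) : ℝ) := by
    exact_mod_cast congrArg (fun z : ℤ => (z : ℝ)) (Int.toNat_of_nonneg (by omega))
  rw [h2]
  push_cast
  ring

lemma Eset_finite_volume (lam : ℝ) : volume (Eset lam) < ⊤ := by
  rw [Eset_volume]; exact ENNReal.natCast_lt_top _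

lemma Ind_integrable (lam : ℝ) : Integrable (Ind lam) := by
  rw [Ind, integrable_indicator_iff (Eset_measurable lam)]
  exact integrableOn_const (Eset_finite_volume lam).ne

lemma Ind_neg (lam : ℝ) (x : ℝ) : Ind lam (-x) = Ind lam x := by
  unfold Ind
  by_cases hx : x ∈ Eset lam
  · rw [indicator_of_mem hx, indicator_of_mem (Eset_neg.mpr hx)]
  · rw [indicator_of_notMem hx, indicator_of_notMem (fun h => hx (Eset_neg.mp h))]

lemma Fconv_eq (lam x : ℝ) : Fconv lam x = ∫ y : ℝ, Ind lam y * Ind lam (x - y) := rfl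

lemma Fconv_zero {lam : ℝ} (h : 1 ≤ lam) (x : ℝ)
    (hx : (1 < |x| ∧ |x| < 2) ∨ lam < |x|) : Fconv lam x = 0 := by
  rw [Fconv_eq]
  have hz : ∀ y : ℝ, Ind lam y * Ind lam (x - y) = 0 := by
    intro y
    by_cases hy : y ∈ Eset lam
    · by_cases hy' : x - y ∈ Eset lam
      · exfalso
        obtain ⟨m, hm1, hm2, hm3, hm4⟩ := mem_Eset_iff.mp hy
        obtain ⟨n, hn1, hn2, hn3, hn4⟩ := mem_Eset_iff.mp hy'
        have hxl : (3 * (m + n) : ℝ) - 1 ≤ x := by push_cast; linarith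
        have hxu : x ≤ (3 * (m + n) : ℝ) + 1 := by push_cast; linarith
        have c1 : (-(⌊(lam - 1) / 6⌋:ℝ)) ≤ m := by exact_mod_cast hm1
        have c2 : (m:ℝ) ≤ (⌊(lam - 1) / 6⌋:ℝ) := by exact_mod_cast hm2
        have c3 : (-(⌊(lam - 1) / 6⌋:ℝ)) ≤ n := by exact_mod_cast hn1
        have c4 : (n:ℝ) ≤ (⌊(lam - 1) / 6⌋:ℝ) := by exact_mod_cast hn2
        rcases hx with ⟨h1, h2⟩ | h1
        · have : m + n = 0 ∨ 1 ≤ m + n ∨ m + n ≤ -1 := by omega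
          rcases this with hk | hk | hk
          · have : ((m:ℝ) + n) = 0 := by exact_mod_cast congrArg (fun z : ℤ => (z:ℝ)) hk
            rcases abs_cases x with ⟨hc, _⟩ | ⟨hc, _⟩ <;> linarith
          · have : (1:ℝ) ≤ (m:ℝ) + n := by exact_mod_cast hk
            rcases abs_cases x with ⟨hc, _⟩ | ⟨hc, _⟩ <;> linarith
          · have : (m:ℝ) + n ≤ -1 := by exact_mod_cast hk
            rcases abs_cases x with ⟨hc, _⟩ | ⟨hc, _⟩ <;> linarith
        · have hNle : (⌊(lam - 1) / 6⌋ : ℝ) ≤ (lam - 1) / 6 := Int.floor_le _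
          rcases abs_cases x with ⟨hc, _⟩ | ⟨hc, _⟩ <;> linarith
      · rw [Ind, indicator_of_notMem hy', mul_zero]
    · rw [Ind, indicator_of_notMem hy, zero_mul]
  rw [show (fun y : ℝ => Ind lam y * Ind lam (x - y)) = fun _ => 0 from funext hz]
  exact integral_zero _ _

lemma Ind_sq (lam : ℝ) (y : ℝ) : Ind lam y * Ind lam y = Ind lam y := by
  unfold Ind
  by_cases hy : y ∈ Eset lam <;> simp [hy]

lemma Fconv_at_zero {lam : ℝ} (h : 1 ≤ lam) :
    Fconv lam 0 = 2 * (⌊(lam - 1) / 6⌋ : ℝ) + 1 := by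
  rw [Fconv_eq]
  have : ∀ y : ℝ, Ind lam y * Ind lam (0 - y) = Ind lam y := by
    intro y
    rw [zero_sub, Ind_neg, Ind_sq]
  rw [show (fun y : ℝ => Ind lam y * Ind lam (0 - y)) = Ind lam from funext this]
  rw [Ind]
  exact (integral_indicator_one (Eset_measurable lam)).trans (Eset_volume_real h)

def cker (ξ : ℝ) : ℝ → ℂ := fun x => Complex.exp (↑(-2 * Real.pi * x * ξ) * Complex.I)

lemma cker_norm (ξ x : ℝ) : ‖cker ξ x‖ = 1 := by
  rw [cker, Complex.norm_exp_ofReal_mul_I]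

lemma cker_add (ξ x y : ℝ) : cker ξ (x + y) = cker ξ x * cker ξ y := by
  simp only [cker]
  rw [← Complex.exp_add]
  congr 1
  push_cast
  ring

lemma cker_continuous (ξ : ℝ) : Continuous (cker ξ) := by
  unfold cker
  exact Complex.continuous_exp.comp (by continuity)

lemma cker_mul_ind_integrable (lam ξ : ℝ) :
    Integrable (fun x => cker ξ x * (Ind lam x : ℂ)) := by
  exact Integrable.bdd_mul ((Ind_integrable lam).ofReal)
    (cker_continuous ξ).aestronglyMeasurable (Eventually.of_forall fun x => le_of_eq (cker_norm ξ x))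

lemma integral_complex_ofReal' {f : ℝ → ℝ} : (∫ x : ℝ, ((f x : ℝ) : ℂ)) = ((∫ x : ℝ, f x : ℝ) : ℂ) :=
  integral_ofReal

lemma integral_complex_im {f : ℝ → ℂ} (hf : Integrable f) :
    (∫ x : ℝ, (f x).im) = (∫ x : ℝ, f x).im :=
  integral_im hf

lemma G_im (lam ξ : ℝ) : (∫ x : ℝ, cker ξ x * (Ind lam x : ℂ)).im = 0 := by
  rw [← integral_complex_im (cker_mul_ind_integrable lam ξ)]
  have him : ∀ x : ℝ, (cker ξ x * (Ind lam x : ℂ)).im = Real.sin (-2 * Real.pi * x * ξ) * Ind lam x := by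
    intro x
    rw [cker]
    simp only [Complex.mul_im, Complex.ofReal_im, Complex.ofReal_re,
      Complex.exp_ofReal_mul_I_im, mul_zero, zero_add]
  simp_rw [him]
  have hodd : ∀ x : ℝ, Real.sin (-2 * Real.pi * (-x) * ξ) * Ind lam (-x)
      = -(Real.sin (-2 * Real.pi * x * ξ) * Ind lam x) := by
    intro x
    rw [Ind_neg]
    rw [show -2 * Real.pi * (-x) * ξ = -(-2 * Real.pi * x * ξ) by ring, Real.sin_neg]
    ring
  have h1 := integral_neg_eq_self (fun x : ℝ => Real.sin (-2 * Real.pi * x * ξ) * Ind lam x) volume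
  beta_reduce at h1
  rw [show (fun x : ℝ => Real.sin (-2 * Real.pi * (-x) * ξ) * Ind lam (-x))
      = fun x : ℝ => -(Real.sin (-2 * Real.pi * x * ξ) * Ind lam x) from funext hodd] at h1
  rw [integral_neg] at h1
  linarith

lemma fourier_formula (lam ξ : ℝ) :
    𝓕 (fun x : ℝ => (Fconv lam x : ℂ)) ξ =
      (∫ x : ℝ, cker ξ x * (Ind lam x : ℂ)) ^ 2 := by
  set G : ℂ := ∫ x : ℝ, cker ξ x * (Ind lam x : ℂ) with hG
  have hconv : Integrable (fun p : ℝ × ℝ => Ind lam p.2 * Ind lam (p.1 - p.2))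
      (volume.prod volume) := by
    have := (Ind_integrable lam).convolution_integrand (ContinuousLinearMap.mul ℝ ℝ)
      (Ind_integrable lam)
    simpa using this
  have hint : Integrable
      (fun p : ℝ × ℝ => cker ξ p.1 * ((Ind lam p.2 * Ind lam (p.1 - p.2) : ℝ) : ℂ))
      (volume.prod volume) :=
    Integrable.bdd_mul (hconv.ofReal)
      ((cker_continuous ξ).comp continuous_fst).aestronglyMeasurable
      (Eventually.of_forall fun p => le_of_eq (cker_norm ξ p.1))
  rw [Real.fourier_real_eq_integral_exp_smul]
  have step1 : ∀ x : ℝ, Complex.exp (↑(-2 * Real.pi * x * ξ) * Complex.I) • ((Fconv lam x : ℝ) : ℂ)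
      = ∫ y : ℝ, cker ξ x * ((Ind lam y * Ind lam (x - y) : ℝ) : ℂ) := by
    intro x
    rw [integral_const_mul, integral_complex_ofReal', smul_eq_mul, ← Fconv_eq, cker]
  calc (∫ x : ℝ, Complex.exp (↑(-2 * Real.pi * x * ξ) * Complex.I) • ((Fconv lam x : ℝ) : ℂ))
      = ∫ x : ℝ, ∫ y : ℝ, cker ξ x * ((Ind lam y * Ind lam (x - y) : ℝ) : ℂ) := by
        congr 1; funext x; exact step1 x
    _ = ∫ y : ℝ, ∫ x : ℝ, cker ξ x * ((Ind lam y * Ind lam (x - y) : ℝ) : ℂ) :=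
        integral_integral_swap hint
    _ = ∫ y : ℝ, ((Ind lam y : ℂ) * cker ξ y) * G := by
        congr 1; funext y
        rw [← MeasureTheory.integral_add_right_eq_self
          (fun x => cker ξ x * ((Ind lam y * Ind lam (x - y) : ℝ) : ℂ)) y]
        simp only [add_sub_cancel_right]
        calc (∫ x : ℝ, cker ξ (x + y) * ((Ind lam y * Ind lam x : ℝ) : ℂ))
            = ∫ x : ℝ, ((Ind lam y : ℂ) * cker ξ y) * (cker ξ x * (Ind lam x : ℂ)) := by
              congr 1; funext x; rw [cker_add]; push_cast; ring
          _ = ((Ind lam y : ℂ) * cker ξ y) * G := integral_const_mul _ _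
    _ = (∫ y : ℝ, (Ind lam y : ℂ) * cker ξ y) * G := integral_mul_const _ _
    _ = G ^ 2 := by
        rw [show (fun y : ℝ => (Ind lam y : ℂ) * cker ξ y) = fun y => cker ξ y * (Ind lam y : ℂ)
          from funext fun y => mul_comm _ _, ← hG]
        ring

lemma floor_nonneg_real {lam : ℝ} (h : 1 ≤ lam) : (0:ℝ) ≤ (⌊(lam - 1) / 6⌋ : ℝ) := by
  have : (0:ℤ) ≤ ⌊(lam - 1) / 6⌋ := Int.floor_nonneg.mpr (by linarith)
  exact_mod_cast this

lemma fourier_at_zero {lam : ℝ} (h : 1 ≤ lam) :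
    (𝓕 (fun x : ℝ => (Fconv lam x : ℂ)) 0) = (((2 * (⌊(lam - 1) / 6⌋ : ℝ) + 1) ^ 2 : ℝ) : ℂ) := by
  rw [fourier_formula]
  have hc : (fun x : ℝ => cker 0 x * (Ind lam x : ℂ)) = fun x : ℝ => ((Ind lam x : ℝ) : ℂ) := by
    funext x
    rw [cker]
    norm_num
  rw [hc, integral_complex_ofReal']
  have hI : (∫ x : ℝ, Ind lam x) = 2 * (⌊(lam - 1) / 6⌋ : ℝ) + 1 := by
    rw [Ind]
    exact (integral_indicator_one (Eset_measurable lam)).trans (Eset_volume_real h)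
  rw [hI]
  push_cast
  ring

/-- Sharpness of the kissing-number linear program in dimension `1`:
for `λ ≥ 1` and `N = ⌊(λ-1)/6⌋`, the function `F_λ = 1_{E_λ} ⋆ 1_{E_λ}` has
nonnegative Fourier transform, vanishes for `1 < |x| < 2` and for `|x| > λ`,
satisfies `F_λ(0)/F̂_λ(0) = 1/(2N+1)`, and `(2+λ)F_λ(0)/F̂_λ(0) → 3` as `λ → ∞`. -/
theorem fejer_trick_dim1 :
    (∀ lam : ℝ, 1 ≤ lam →
      (∀ ξ : ℝ, (𝓕 (fun x : ℝ => (Fconv lam x : ℂ)) ξ).im = 0 ∧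
        0 ≤ (𝓕 (fun x : ℝ => (Fconv lam x : ℂ)) ξ).re) ∧
      (∀ x : ℝ, (1 < |x| ∧ |x| < 2) ∨ lam < |x| → Fconv lam x = 0) ∧
      Fconv lam 0 / (𝓕 (fun x : ℝ => (Fconv lam x : ℂ)) 0).re =
        1 / (2 * (⌊(lam - 1) / 6⌋ : ℝ) + 1)) ∧
    Tendsto
      (fun lam : ℝ =>
        (2 + lam) * Fconv lam 0 / (𝓕 (fun x : ℝ => (Fconv lam x : ℂ)) 0).re)
      atTop (nhds 3) := by
  have hkey : ∀ lam : ℝ, 1 ≤ lam →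
      (𝓕 (fun x : ℝ => (Fconv lam x : ℂ)) 0).re = (2 * (⌊(lam - 1) / 6⌋ : ℝ) + 1) ^ 2 := by
    intro lam hlam
    rw [fourier_at_zero hlam, Complex.ofReal_re]
  constructor
  · intro lam hlam
    have hM : (0:ℝ) < 2 * (⌊(lam - 1) / 6⌋ : ℝ) + 1 := by
      have := floor_nonneg_real hlam; linarith
    refine ⟨?_, Fconv_zero hlam, ?_⟩
    · intro ξ
      rw [fourier_formula]
      have him := G_im lam ξ
      constructor
      · rw [sq, Complex.mul_im, him]; ring
      · rw [sq, Complex.mul_re, him]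
        nlinarith [mul_self_nonneg (∫ x : ℝ, cker ξ x * (Ind lam x : ℂ)).re]
    · rw [Fconv_at_zero hlam, hkey lam hlam]
      field_simp
  · have hcong : (fun lam : ℝ => (2 + lam) / (2 * (⌊(lam - 1) / 6⌋ : ℝ) + 1)) =ᶠ[atTop]
        (fun lam : ℝ =>
          (2 + lam) * Fconv lam 0 / (𝓕 (fun x : ℝ => (Fconv lam x : ℂ)) 0).re) := by
      filter_upwards [eventually_ge_atTop (1:ℝ)] with lam hlam
      have hM : (0:ℝ) < 2 * (⌊(lam - 1) / 6⌋ : ℝ) + 1 := by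
        have := floor_nonneg_real hlam; linarith
      rw [Fconv_at_zero hlam, hkey lam hlam]
      field_simp
    refine Tendsto.congr' hcong ?_
    apply tendsto_of_tendsto_of_tendsto_of_le_of_le' (g := fun _ : ℝ => (3:ℝ))
      (h := fun lam : ℝ => 3 * (lam + 2) / (lam - 4)) tendsto_const_nhds
    · have h0 : Tendsto (fun lam : ℝ => 18 / (lam - 4)) atTop (nhds 0) :=
        Tendsto.div_atTop tendsto_const_nhds (tendsto_atTop_add_const_right _ _ tendsto_id)
      have h3 : Tendsto (fun lam : ℝ => 3 + 18 / (lam - 4)) atTop (nhds 3) := by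
        simpa using tendsto_const_nhds.add h0
      refine Tendsto.congr' ?_ h3
      filter_upwards [eventually_gt_atTop (4:ℝ)] with lam h4
      have : lam - 4 ≠ 0 := by linarith
      field_simp
      ring
    · filter_upwards [eventually_ge_atTop (1:ℝ)] with lam hlam
      have hfl : (⌊(lam - 1) / 6⌋ : ℝ) ≤ (lam - 1) / 6 := Int.floor_le _
      have hM : (0:ℝ) < 2 * (⌊(lam - 1) / 6⌋ : ℝ) + 1 := by
        have := floor_nonneg_real hlam; linarith
      rw [le_div_iff₀ hM]
      linarith
    · filter_upwards [eventually_gt_atTop (4:ℝ)] with lam h4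
      have hfl : (lam - 1) / 6 - 1 < (⌊(lam - 1) / 6⌋ : ℝ) := Int.sub_one_lt_floor _
      have hd : (0:ℝ) < (lam - 4) / 3 := by linarith
      have hM : (0:ℝ) < 2 * (⌊(lam - 1) / 6⌋ : ℝ) + 1 := by linarith
      have hle : (lam - 4) / 3 ≤ 2 * (⌊(lam - 1) / 6⌋ : ℝ) + 1 := by linarith
      calc (2 + lam) / (2 * (⌊(lam - 1) / 6⌋ : ℝ) + 1)
          ≤ (2 + lam) / ((lam - 4) / 3) :=
            div_le_div_of_nonneg_left (by linarith) hd hle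
        _ = 3 * (lam + 2) / (lam - 4) := by
            rw [div_div_eq_mul_div]
            ring
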